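/- In the setting of a (P2+P3, complement-of-(P2+P3))-free graph G with induced 5-cycle C on v1,...,v5, for every i in {1,...,5}, if V_{i,i+2} contains at least three vertices, then no vertex of V_{i-1,i+1} is adjacent to any vertex of V_{i+1,i+3}. -/

import Mathlib

/-- `G` contains no induced subgraph isomorphic to `H`. -/
def InducedFree {α V : Type*} (G : SimpleGraph V) (H : SimpleGraph α) : Prop :=
  ∀ f : α ↪ V, ¬ (∀ a b : α, H.Adj a b ↔ G.Adj (f a) (f b))

/-- `P₂ + P₃`: the disjoint union of a 2-vertex path and a 3-vertex path. -/
def P2PlusP3 : SimpleGraph (Fin 5) :=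
  SimpleGraph.fromRel fun a b => (a = 0 ∧ b = 1) ∨ (a = 2 ∧ b = 3) ∨ (a = 3 ∧ b = 4)

/-- `VS G v S`: the vertices outside the 5-cycle `v 0, …, v 4` whose
neighbourhood on the cycle is exactly `{v i : i ∈ S}`. -/
def VS {V : Type*} (G : SimpleGraph V) (v : ZMod 5 → V) (S : Set (ZMod 5)) : Set V :=
  {x | (∀ i, x ≠ v i) ∧ ∀ i, G.Adj x (v i) ↔ i ∈ S}

lemma find_P2P3 {V : Type*} (G : SimpleGraph V) (p q r s t : V)
    (hpq : G.Adj p q) (hrs : G.Adj r s) (hst : G.Adj s t)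
    (hrt : ¬ G.Adj r t) (hpr : ¬ G.Adj p r) (hps : ¬ G.Adj p s) (hpt : ¬ G.Adj p t)
    (hqr : ¬ G.Adj q r) (hqs : ¬ G.Adj q s) (hqt : ¬ G.Adj q t)
    (dpr : p ≠ r) (dps : p ≠ s) (dpt : p ≠ t)
    (dqr : q ≠ r) (dqs : q ≠ s) (dqt : q ≠ t) (drt : r ≠ t) :
    ¬ InducedFree G P2PlusP3 := by
  intro h
  have dpq := hpq.ne
  have drs := hrs.ne
  have dst := hst.ne
  have inj : Function.Injective ![p, q, r, s, t] := by
    intro a b hab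
    fin_cases a <;> fin_cases b <;> simp_all
  apply h ⟨![p, q, r, s, t], inj⟩
  intro a b
  fin_cases a <;> fin_cases b <;>
    simp [P2PlusP3, SimpleGraph.fromRel_adj] <;>
    first
    | exact hpq | exact hrs | exact hst | exact hpq.symm | exact hrs.symm | exact hst.symm
    | exact hrt | exact hpr | exact hps | exact hpt | exact hqr | exact hqs | exact hqt
    | exact fun hh => hrt hh.symm | exact fun hh => hpr hh.symm | exact fun hh => hps hh.symm
    | exact fun hh => hpt hh.symm | exact fun hh => hqr hh.symm | exact fun hh => hqs hh.symm
    | exact fun hh => hqt hh.symm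

/-- For each `i`, if `V_{i,i+2}` has at least three vertices then
`V_{i-1,i+1}` is anticomplete to `V_{i+1,i+3}`. -/
theorem stmt_18 {V : Type*} [Fintype V] (G : SimpleGraph V)
    (hG : InducedFree G P2PlusP3) (hGc : InducedFree Gᶜ P2PlusP3)
    (v : ZMod 5 → V) (hv : Function.Injective v)
    (hC : ∀ i j : ZMod 5, G.Adj (v i) (v j) ↔ j = i + 1 ∨ j = i - 1) :
    ∀ i : ZMod 5, 3 ≤ (VS G v {i, i + 2}).ncard →
      ∀ x ∈ VS G v {i - 1, i + 1}, ∀ y ∈ VS G v {i + 1, i + 3}, ¬ G.Adj x y := by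
  intro i hA x hx y hy hxy
  simp only [VS, Set.mem_setOf_eq] at hx hy
  set w : ZMod 5 → V := fun k => v (i + k) with hw
  -- cycle adjacency in relabeled form
  have hwv : ∀ a b : ZMod 5, G.Adj (w a) (w b) ↔ (b = a + 1 ∨ b = a - 1) := by
    intro a b
    have key : ∀ c a b : ZMod 5, (c + b = c + a + 1 ∨ c + b = c + a - 1) ↔
        (b = a + 1 ∨ b = a - 1) := by decide
    rw [hw]
    simp only []
    rw [hC]
    exact key i a b
  have wne : ∀ a b : ZMod 5, a ≠ b → w a ≠ w b := by
    intro a b hab hh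
    exact hab (add_left_cancel (hv hh))
  -- adjacency of x, y to the cycle
  have hxw : ∀ k : ZMod 5, G.Adj x (w k) ↔ (k = 4 ∨ k = 1) := by
    intro k
    have key : ∀ i k : ZMod 5, (i + k = i - 1 ∨ i + k = i + 1) ↔ (k = 4 ∨ k = 1) := by decide
    rw [hw]; simp only []
    rw [hx.2 (i + k)]
    simp only [Set.mem_insert_iff, Set.mem_singleton_iff]
    exact key i k
  have hyw : ∀ k : ZMod 5, G.Adj y (w k) ↔ (k = 1 ∨ k = 3) := by
    intro k
    have key : ∀ i k : ZMod 5, (i + k = i + 1 ∨ i + k = i + 3) ↔ (k = 1 ∨ k = 3) := by decide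
    rw [hw]; simp only []
    rw [hy.2 (i + k)]
    simp only [Set.mem_insert_iff, Set.mem_singleton_iff]
    exact key i k
  have hxne : ∀ k : ZMod 5, x ≠ w k := fun k => hx.1 (i + k)
  have hyne : ∀ k : ZMod 5, y ≠ w k := fun k => hy.1 (i + k)
  -- adjacency of elements of A to the cycle
  have hAw : ∀ a ∈ VS G v {i, i + 2}, (∀ k : ZMod 5, G.Adj a (w k) ↔ (k = 0 ∨ k = 2)) ∧
      (∀ k : ZMod 5, a ≠ w k) := by
    intro a ha
    simp only [VS, Set.mem_setOf_eq] at ha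
    constructor
    · intro k
      have key : ∀ i k : ZMod 5, (i + k = i ∨ i + k = i + 2) ↔ (k = 0 ∨ k = 2) := by decide
      rw [hw]; simp only []
      rw [ha.2 (i + k)]
      simp only [Set.mem_insert_iff, Set.mem_singleton_iff]
      exact key i k
    · exact fun k => ha.1 (i + k)
  -- basic adjacency facts
  have ax0 : ∀ a ∈ VS G v {i, i + 2}, G.Adj a (w 0) := fun a ha => ((hAw a ha).1 0).mpr (by decide)
  have ax2 : ∀ a ∈ VS G v {i, i + 2}, G.Adj a (w 2) := fun a ha => ((hAw a ha).1 2).mpr (by decide)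
  have nax1 : ∀ a ∈ VS G v {i, i + 2}, ¬ G.Adj a (w 1) :=
    fun a ha hh => by have := ((hAw a ha).1 1).mp hh; revert this; decide
  have nax3 : ∀ a ∈ VS G v {i, i + 2}, ¬ G.Adj a (w 3) :=
    fun a ha hh => by have := ((hAw a ha).1 3).mp hh; revert this; decide
  have nax4 : ∀ a ∈ VS G v {i, i + 2}, ¬ G.Adj a (w 4) :=
    fun a ha hh => by have := ((hAw a ha).1 4).mp hh; revert this; decide
  have hx4 : G.Adj x (w 4) := (hxw 4).mpr (by decide)
  have hx1 : G.Adj x (w 1) := (hxw 1).mpr (by decide)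
  have nx0 : ¬ G.Adj x (w 0) := fun hh => by have := (hxw 0).mp hh; revert this; decide
  have nx2 : ¬ G.Adj x (w 2) := fun hh => by have := (hxw 2).mp hh; revert this; decide
  have nx3 : ¬ G.Adj x (w 3) := fun hh => by have := (hxw 3).mp hh; revert this; decide
  have hy1 : G.Adj y (w 1) := (hyw 1).mpr (by decide)
  have hy3 : G.Adj y (w 3) := (hyw 3).mpr (by decide)
  have ny0 : ¬ G.Adj y (w 0) := fun hh => by have := (hyw 0).mp hh; revert this; decide
  have ny2 : ¬ G.Adj y (w 2) := fun hh => by have := (hyw 2).mp hh; revert this; decide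
  have ny4 : ¬ G.Adj y (w 4) := fun hh => by have := (hyw 4).mp hh; revert this; decide
  -- cycle adjacencies
  have c01 : G.Adj (w 0) (w 1) := (hwv 0 1).mpr (by decide)
  have c12 : G.Adj (w 1) (w 2) := (hwv 1 2).mpr (by decide)
  have c23 : G.Adj (w 2) (w 3) := (hwv 2 3).mpr (by decide)
  have c34 : G.Adj (w 3) (w 4) := (hwv 3 4).mpr (by decide)
  have c40 : G.Adj (w 4) (w 0) := (hwv 4 0).mpr (by decide)
  have n02 : ¬ G.Adj (w 0) (w 2) := fun hh => by have := (hwv 0 2).mp hh; revert this; decide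
  have n03 : ¬ G.Adj (w 0) (w 3) := fun hh => by have := (hwv 0 3).mp hh; revert this; decide
  have n13 : ¬ G.Adj (w 1) (w 3) := fun hh => by have := (hwv 1 3).mp hh; revert this; decide
  have n14 : ¬ G.Adj (w 1) (w 4) := fun hh => by have := (hwv 1 4).mp hh; revert this; decide
  have n24 : ¬ G.Adj (w 2) (w 4) := fun hh => by have := (hwv 2 4).mp hh; revert this; decide
  -- distinctness of A-elements from x and y
  have dax : ∀ a ∈ VS G v {i, i + 2}, a ≠ x := by
    intro a ha hh; exact nx0 (hh ▸ ax0 a ha)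
  have day : ∀ a ∈ VS G v {i, i + 2}, a ≠ y := by
    intro a ha hh; exact ny0 (hh ▸ ax0 a ha)
  -- Step 2: no a in A adjacent to both x and y
  have notBoth : ∀ a ∈ VS G v {i, i + 2}, ¬ (G.Adj a x ∧ G.Adj a y) := by
    rintro a ha ⟨hax, hay⟩
    refine find_P2P3 Gᶜ a (w 1) x (w 0) y ?_ ?_ ?_ ?_ ?_ ?_ ?_ ?_ ?_ ?_ ?_ ?_ ?_ ?_ ?_ ?_ ?_ hGc
    · exact ⟨(hAw a ha).2 1, nax1 a ha⟩
    · exact ⟨(hxne 0), nx0⟩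
    · exact ⟨fun hh => hyne 0 hh.symm, fun hh => ny0 hh.symm⟩
    · simp only [SimpleGraph.compl_adj, not_and, not_not]; intro _; exact hxy
    · simp only [SimpleGraph.compl_adj, not_and, not_not]; intro _; exact hax
    · simp only [SimpleGraph.compl_adj, not_and, not_not]; intro _; exact ax0 a ha
    · simp only [SimpleGraph.compl_adj, not_and, not_not]; intro _; exact hay
    · simp only [SimpleGraph.compl_adj, not_and, not_not]; intro _; exact hx1.symm
    · simp only [SimpleGraph.compl_adj, not_and, not_not]; intro _; exact c01.symm
    · simp only [SimpleGraph.compl_adj, not_and, not_not]; intro _; exact hy1.symm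
    · exact dax a ha
    · exact (hAw a ha).2 0
    · exact day a ha
    · exact fun hh => hxne 1 hh.symm
    · exact fun hh => wne 1 0 (by decide) hh
    · exact fun hh => hyne 1 hh.symm
    · exact hxy.ne
  -- Step 3/4 (x version): no two distinct a, b in A both non-adjacent to x
  have pairX : ∀ a ∈ VS G v {i, i + 2}, ∀ b ∈ VS G v {i, i + 2}, a ≠ b →
      ¬ G.Adj a x → ¬ G.Adj b x → False := by
    intro a ha b hb hab hax hbx
    by_cases hadj : G.Adj a b
    · refine find_P2P3 G a b (w 4) x (w 1) hadj (hx4.symm) hx1 (fun hh => n14 hh.symm)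
        (nax4 a ha) hax (nax1 a ha) (nax4 b hb) hbx (nax1 b hb)
        ((hAw a ha).2 4) (dax a ha) ((hAw a ha).2 1)
        ((hAw b hb).2 4) (dax b hb) ((hAw b hb).2 1) (wne 4 1 (by decide)) hG
    · refine find_P2P3 G x (w 4) a (w 2) b hx4 (ax2 a ha) ((ax2 b hb).symm)
        hadj (fun hh => hax hh.symm) nx2 (fun hh => hbx hh.symm)
        (fun hh => nax4 a ha hh.symm) (fun hh => n24 hh.symm) (fun hh => nax4 b hb hh.symm)
        (fun hh => dax a ha hh.symm) (hxne 2) (fun hh => dax b hb hh.symm)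
        (fun hh => (hAw a ha).2 4 hh.symm) (fun hh => wne 4 2 (by decide) hh)
        (fun hh => (hAw b hb).2 4 hh.symm) hab hG
  -- Step 3/4 (y version)
  have pairY : ∀ a ∈ VS G v {i, i + 2}, ∀ b ∈ VS G v {i, i + 2}, a ≠ b →
      ¬ G.Adj a y → ¬ G.Adj b y → False := by
    intro a ha b hb hab hay hby
    by_cases hadj : G.Adj a b
    · refine find_P2P3 G a b (w 3) y (w 1) hadj (hy3.symm) hy1 (fun hh => n13 hh.symm)
        (nax3 a ha) hay (nax1 a ha) (nax3 b hb) hby (nax1 b hb)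
        ((hAw a ha).2 3) (day a ha) ((hAw a ha).2 1)
        ((hAw b hb).2 3) (day b hb) ((hAw b hb).2 1) (wne 3 1 (by decide)) hG
    · refine find_P2P3 G y (w 3) a (w 0) b hy3 (ax0 a ha) ((ax0 b hb).symm)
        hadj (fun hh => hay hh.symm) ny0 (fun hh => hby hh.symm)
        (fun hh => nax3 a ha hh.symm) (fun hh => n03 hh.symm) (fun hh => nax3 b hb hh.symm)
        (fun hh => day a ha hh.symm) (hyne 0) (fun hh => day b hb hh.symm)
        (fun hh => (hAw a ha).2 3 hh.symm) (fun hh => wne 3 0 (by decide) hh)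
        (fun hh => (hAw b hb).2 3 hh.symm) hab hG
  -- extract three distinct elements of A
  obtain ⟨T, hTsub, hT3⟩ := Set.exists_subset_card_eq (s := VS G v {i, i + 2}) hA
  obtain ⟨a, b, c, hab, hac, hbc, rfl⟩ := Set.ncard_eq_three.mp hT3
  have ha : a ∈ VS G v {i, i + 2} := hTsub (by simp)
  have hb : b ∈ VS G v {i, i + 2} := hTsub (by simp)
  have hc : c ∈ VS G v {i, i + 2} := hTsub (by simp)
  -- pigeonhole
  by_cases hax : G.Adj a x <;> by_cases hbx : G.Adj b x <;> by_cases hcx : G.Adj c x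
  · by_cases hay : G.Adj a y
    · exact notBoth a ha ⟨hax, hay⟩
    · by_cases hby : G.Adj b y
      · exact notBoth b hb ⟨hbx, hby⟩
      · exact pairY a ha b hb hab hay hby
  · by_cases hay : G.Adj a y
    · exact notBoth a ha ⟨hax, hay⟩
    · by_cases hby : G.Adj b y
      · exact notBoth b hb ⟨hbx, hby⟩
      · exact pairY a ha b hb hab hay hby
  · by_cases hay : G.Adj a y
    · exact notBoth a ha ⟨hax, hay⟩
    · by_cases hcy : G.Adj c y
      · exact notBoth c hc ⟨hcx, hcy⟩
      · exact pairY a ha c hc hac hay hcy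
  · exact pairX b hb c hc hbc hbx hcx
  · by_cases hby : G.Adj b y
    · exact notBoth b hb ⟨hbx, hby⟩
    · by_cases hcy : G.Adj c y
      · exact notBoth c hc ⟨hcx, hcy⟩
      · exact pairY b hb c hc hbc hby hcy
  · exact pairX a ha c hc hac hax hcx
  · exact pairX a ha b hb hab hax hbx
  · exact pairX a ha b hb hab hax hbx
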